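/- arXiv:math/0001036 — 4 statements merged into one kernel-verified Lean document; each statement's English description precedes it below -/
import Mathlib

section
/- For every complex number z with 0 < Re z and z ≠ 1, the partial sums of the alternating series converge: the sequence N ↦ ∑_{n=1}^{N} (-1)^n / n^z tends (as N → ∞) to ζ(z)·(2^{1-z} − 1), where ζ is the Riemann zeta function and n^z, 2^{1-z} denote principal-branch complex powers. -/
open Filter Finset

open Complex in
/-- Derivative bound: for `1 ≤ a ≤ b` and `0 ≤ re z`,
`‖b^(-z) - a^(-z)‖ ≤ ‖z‖ * a^(-re z - 1) * (b - a)`. -/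
lemma cpow_neg_sub_bound {a b : ℝ} (ha : 1 ≤ a) (hab : a ≤ b) {z : ℂ} (hz : 0 ≤ z.re) :
    ‖(b : ℂ) ^ (-z) - (a : ℂ) ^ (-z)‖ ≤ ‖z‖ * a ^ (-z.re - 1) * (b - a) := by
  have ha0 : (0:ℝ) < a := lt_of_lt_of_le one_pos ha
  set f : ℝ → ℂ := fun t => (t : ℂ) ^ (-z)
  set f' : ℝ → ℂ := fun t => -z * (t : ℂ) ^ (-z - 1)
  have hderiv : ∀ t ∈ Set.Icc a b, HasDerivWithinAt f (f' t) (Set.Icc a b) t := by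
    intro t ht
    have ht0 : (0:ℝ) < t := lt_of_lt_of_le ha0 ht.1
    have h1 : HasDerivAt (fun y : ℂ => y ^ (-z)) (-z * (t:ℂ) ^ (-z - 1) * 1) (t:ℂ) :=
      (hasDerivAt_id ((t:ℝ) : ℂ)).cpow_const (Complex.ofReal_mem_slitPlane.mpr ht0)
    have h2 : HasDerivAt f (-z * (t:ℂ) ^ (-z - 1) * 1) t := h1.comp_ofReal
    simpa [f', mul_one] using h2.hasDerivWithinAt
  have hbound : ∀ t ∈ Set.Icc a b, ‖f' t‖ ≤ ‖z‖ * a ^ (-z.re - 1) := by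
    intro t ht
    have ht0 : (0:ℝ) < t := lt_of_lt_of_le ha0 ht.1
    have : ‖f' t‖ = ‖z‖ * t ^ (-z.re - 1) := by
      rw [norm_mul, norm_neg]
      congr 1
      rw [Complex.norm_cpow_eq_rpow_re_of_pos ht0]
      norm_num
    rw [this]
    have : t ^ (-z.re - 1) ≤ a ^ (-z.re - 1) :=
      Real.rpow_le_rpow_of_nonpos ha0 ht.1 (by linarith)
    exact mul_le_mul_of_nonneg_left this (norm_nonneg _)
  have := Convex.norm_image_sub_le_of_norm_hasDerivWithin_le hderiv hbound
    (convex_Icc a b) (Set.left_mem_Icc.mpr hab) (Set.right_mem_Icc.mpr hab)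
  calc ‖(b : ℂ) ^ (-z) - (a : ℂ) ^ (-z)‖ = ‖f b - f a‖ := rfl
  _ ≤ ‖z‖ * a ^ (-z.re - 1) * ‖b - a‖ := this
  _ = ‖z‖ * a ^ (-z.re - 1) * (b - a) := by rw [Real.norm_eq_abs, _root_.abs_of_nonneg (by linarith : (0:ℝ) ≤ b - a)]

/-- The paired terms of the alternating series. -/
noncomputable def altPair (z : ℂ) (k : ℕ) : ℂ :=
  (2 * (k : ℂ) + 2) ^ (-z) - (2 * (k : ℂ) + 1) ^ (-z)

lemma norm_altPair_le {z : ℂ} (hz : 0 ≤ z.re) (k : ℕ) :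
    ‖altPair z k‖ ≤ ‖z‖ * (2 * (k:ℝ) + 1) ^ (-z.re - 1) := by
  have h := cpow_neg_sub_bound (a := 2*(k:ℝ)+1) (b := 2*(k:ℝ)+2)
    (by norm_num) (by linarith) hz
  have e1 : ((2*(k:ℝ)+1 : ℝ) : ℂ) = 2 * (k:ℂ) + 1 := by push_cast; ring
  have e2 : ((2*(k:ℝ)+2 : ℝ) : ℂ) = 2 * (k:ℂ) + 2 := by push_cast; ring
  rw [e1, e2] at h
  have : (2*(k:ℝ)+2) - (2*(k:ℝ)+1) = 1 := by ring
  rw [this, mul_one] at h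
  simpa [altPair] using h

lemma summable_aux {c : ℝ} (hc : 0 < c) :
    Summable (fun k : ℕ => (2 * (k:ℝ) + 1) ^ (-c - 1)) := by
  have h1 : Summable (fun k : ℕ => ((k:ℝ) + 1) ^ (-c - 1)) := by
    have := (Real.summable_nat_rpow (p := -c - 1)).mpr (by linarith)
    exact (summable_nat_add_iff 1).mpr (by exact_mod_cast this) |>.congr fun n => by push_cast; ring_nf
  refine h1.of_nonneg_of_le (fun k => Real.rpow_nonneg (by positivity) _) fun k => ?_
  exact Real.rpow_le_rpow_of_nonpos (by positivity) (by linarith) (by linarith)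

lemma summable_altPair {z : ℂ} (hz : 0 < z.re) : Summable (altPair z) := by
  refine Summable.of_norm_bounded ((summable_aux hz).mul_left ‖z‖) (norm_altPair_le hz.le)

/-- The tail function: limit of partial sums, defined as a tsum of pairs. -/
noncomputable def altEta (z : ℂ) : ℂ := ∑' k : ℕ, altPair z k

noncomputable def altS (z : ℂ) (N : ℕ) : ℂ := ∑ n ∈ Finset.Icc 1 N, (-1 : ℂ) ^ n / (n : ℂ) ^ z

lemma altS_even (z : ℂ) (N : ℕ) : altS z (2 * N) = ∑ k ∈ range N, altPair z k := by
  induction N with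
  | zero => simp [altS]
  | succ N ih =>
    have h1 : 2 * (N + 1) = (2 * N + 1) + 1 := by ring
    rw [h1, altS, Finset.sum_Icc_succ_top (by omega), Finset.sum_Icc_succ_top (by omega),
      ← altS, ih, Finset.sum_range_succ]
    have hodd : ((-1:ℂ)) ^ (2*N+1) = -1 := Odd.neg_one_pow ⟨N, by ring⟩
    have heven : ((-1:ℂ)) ^ (2*N+1+1) = 1 := Even.neg_one_pow ⟨N+1, by ring⟩
    rw [hodd, heven, altPair]
    push_cast
    rw [Complex.cpow_neg, Complex.cpow_neg]
    ring_nf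

lemma altS_odd (z : ℂ) (N : ℕ) :
    altS z (2 * N + 1) = (∑ k ∈ range N, altPair z k) - ((2*N+1 : ℕ) : ℂ) ^ (-z) := by
  rw [altS, Finset.sum_Icc_succ_top (by omega), ← altS, altS_even]
  have hodd : ((-1:ℂ)) ^ (2*N+1) = -1 := Odd.neg_one_pow ⟨N, by ring⟩
  rw [hodd, Complex.cpow_neg]
  push_cast
  ring

lemma tendsto_altS (z : ℂ) (hz : 0 < z.re) :
    Tendsto (altS z) atTop (nhds (altEta z)) := by
  have hsum : HasSum (altPair z) (altEta z) := (summable_altPair hz).hasSum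
  have hT : Tendsto (fun N => ∑ k ∈ range N, altPair z k) atTop (nhds (altEta z)) :=
    hsum.tendsto_sum_nat
  have hdiv : Tendsto (fun N : ℕ => N / 2) atTop atTop :=
    Tendsto.comp (tendsto_id) (tendsto_atTop_atTop.mpr fun b => ⟨2 * b, fun a ha => by omega⟩)
  have hT2 : Tendsto (fun N : ℕ => ∑ k ∈ range (N / 2), altPair z k) atTop (nhds (altEta z)) :=
    hT.comp hdiv
  -- error term
  have herr : Tendsto (fun N : ℕ => altS z N - ∑ k ∈ range (N / 2), altPair z k)
      atTop (nhds 0) := by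
    have hbound : ∀ N : ℕ, 1 ≤ N →
        ‖altS z N - ∑ k ∈ range (N / 2), altPair z k‖ ≤ ((N:ℝ)) ^ (-z.re) := by
      intro N hN
      rcases Nat.even_or_odd N with ⟨m, hm⟩ | ⟨m, hm⟩
      · have : N = 2 * m := by omega
        subst this
        rw [Nat.mul_div_cancel_left m (by norm_num), altS_even, sub_self, norm_zero]
        positivity
      · have : N = 2 * m + 1 := by omega
        subst this
        have hdiv2 : (2 * m + 1) / 2 = m := by omega
        rw [hdiv2, altS_odd, sub_sub_cancel_left, norm_neg]
        rw [Complex.norm_natCast_cpow_of_pos (by omega), Complex.neg_re]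
    have hg : Tendsto (fun N : ℕ => ((N:ℝ)) ^ (-z.re)) atTop (nhds 0) :=
      (tendsto_rpow_neg_atTop hz).comp tendsto_natCast_atTop_atTop
    refine squeeze_zero_norm' ?_ hg
    filter_upwards [eventually_ge_atTop 1] with N hN using hbound N hN
  have h2 := hT2.add herr
  rw [add_zero] at h2
  exact h2.congr fun N => by ring

lemma analyticOnNhd_altEta : AnalyticOnNhd ℂ altEta {z : ℂ | 0 < z.re} := by
  have hUo : IsOpen {z : ℂ | 0 < z.re} := isOpen_lt continuous_const Complex.continuous_re
  refine DifferentiableOn.analyticOnNhd (fun z₀ hz₀ => ?_) hUo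
  have hz₀' : 0 < z₀.re := hz₀
  set σ : ℝ := z₀.re / 2 with hσ
  set R : ℝ := ‖z₀‖ + 1 with hR
  set S : Set ℂ := {w : ℂ | σ < w.re ∧ ‖w‖ < R} with hS
  have hSopen : IsOpen S :=
    (isOpen_lt continuous_const Complex.continuous_re).inter
      (isOpen_lt continuous_norm continuous_const)
  have hz₀S : z₀ ∈ S := ⟨by simp only [hσ]; linarith, by simp [hR]⟩
  have hσ0 : 0 < σ := by positivity
  have hdiff : DifferentiableOn ℂ (fun w => ∑' k : ℕ, altPair w k) S := by
    refine Complex.differentiableOn_tsum_of_summable_norm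
      (u := fun k => R * (2 * (k:ℝ) + 1) ^ (-σ - 1)) ((summable_aux hσ0).mul_left R) ?_ hSopen ?_
    · intro k
      have h2 : (2*(k:ℂ)+2) ≠ 0 := by
        have e : ((2*k+2:ℕ):ℂ) = 2*(k:ℂ)+2 := by push_cast; ring
        rw [← e]; exact Nat.cast_ne_zero.mpr (by omega)
      have h1 : (2*(k:ℂ)+1) ≠ 0 := by
        have e : ((2*k+1:ℕ):ℂ) = 2*(k:ℂ)+1 := by push_cast; ring
        rw [← e]; exact Nat.cast_ne_zero.mpr (by omega)
      exact ((differentiable_neg.const_cpow (Or.inl h2)).sub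
        (differentiable_neg.const_cpow (Or.inl h1))).differentiableOn
    · intro k w hw
      have h1 : ‖altPair w k‖ ≤ ‖w‖ * (2 * (k:ℝ) + 1) ^ (-w.re - 1) :=
        norm_altPair_le (by linarith [hw.1]) k
      refine h1.trans (mul_le_mul hw.2.le ?_ (Real.rpow_nonneg (by positivity) _)
        (by linarith [norm_nonneg z₀]))
      refine Real.rpow_le_rpow_of_exponent_le (by linarith [Nat.cast_nonneg (α := ℝ) k]) (by linarith [hw.1])
  exact ((hdiff.differentiableAt (hSopen.mem_nhds hz₀S)).congr_of_eventuallyEq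
    (by filter_upwards with w using rfl)).differentiableWithinAt

open Complex in
lemma hasSum_altF {z : ℂ} (hs : 1 < z.re) :
    HasSum (fun n : ℕ => (-1 : ℂ) ^ n / (n : ℂ) ^ z)
      (riemannZeta z * ((2 : ℂ) ^ ((1:ℂ) - z) - 1)) := by
  classical
  have hz0 : z ≠ 0 := Complex.ne_zero_of_one_lt_re hs
  have h2z : ((2:ℂ)) ^ z ≠ 0 := by
    rw [Complex.cpow_def_of_ne_zero two_ne_zero]; exact Complex.exp_ne_zero _
  have h0 : HasSum (fun n : ℕ => 1 / (n : ℂ) ^ z) (riemannZeta z) := by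
    rw [zeta_eq_tsum_one_div_nat_cpow hs]
    exact (Complex.summable_one_div_nat_cpow.mpr hs).hasSum
  have key : ∀ n : ℕ, (2 : ℂ) / ((2 * n : ℕ) : ℂ) ^ z
      = (2:ℂ) ^ ((1:ℂ) - z) * (1 / (n:ℂ) ^ z) := by
    intro n
    have h2e : (2:ℂ) ^ ((1:ℂ) - z) = 2 * ((2:ℂ) ^ z)⁻¹ := by
      rw [sub_eq_add_neg, Complex.cpow_add _ _ two_ne_zero, Complex.cpow_one,
        Complex.cpow_neg]
    rcases Nat.eq_zero_or_pos n with rfl | hn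
    · simp [Complex.zero_cpow hz0]
    · have hmul : (((2 * n : ℕ) : ℂ)) ^ z = (2:ℂ) ^ z * ((n:ℕ):ℂ) ^ z := by
        have := Complex.mul_cpow_ofReal_nonneg (by norm_num : (0:ℝ) ≤ 2)
          (Nat.cast_nonneg n) z
        push_cast at this ⊢
        exact this
      rw [hmul, h2e]
      field_simp
  have hg : HasSum (fun n : ℕ => if Even n then 2 / (n : ℂ) ^ z else 0)
      ((2:ℂ) ^ ((1:ℂ) - z) * riemannZeta z) := by
    have hinj : Function.Injective (fun k : ℕ => 2 * k) := by
      intro a b h; simp only at h; omega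
    refine (Function.Injective.hasSum_iff hinj ?_).mp ?_
    · intro n hn
      have hne : ¬ Even n := by
        rintro ⟨m, hm⟩
        exact hn ⟨m, by simp only; omega⟩
      simp [hne]
    · have h' := h0.mul_left ((2:ℂ) ^ ((1:ℂ) - z))
      have e : ((fun n : ℕ => if Even n then 2 / (n : ℂ) ^ z else 0) ∘ fun k : ℕ => 2 * k)
          = fun k : ℕ => (2:ℂ) ^ ((1:ℂ) - z) * (1 / (k:ℂ) ^ z) := by
        funext k
        simp only [Function.comp]
        rw [if_pos ⟨k, by ring⟩, key k]
      rw [e]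
      exact h'
  have hF : (fun n : ℕ => (-1 : ℂ) ^ n / (n : ℂ) ^ z)
      = fun n : ℕ => (if Even n then 2 / (n : ℂ) ^ z else 0) - 1 / (n : ℂ) ^ z := by
    funext n
    rcases Nat.even_or_odd n with he | ho
    · rw [he.neg_one_pow, if_pos he, div_sub_div_same]; norm_num
    · rw [ho.neg_one_pow, if_neg (Nat.not_even_iff_odd.mpr ho), zero_sub, neg_div]
  rw [hF]
  have h2 := hg.sub h0
  rw [show riemannZeta z * ((2 : ℂ) ^ ((1:ℂ) - z) - 1)
      = (2:ℂ) ^ ((1:ℂ) - z) * riemannZeta z - riemannZeta z by ring]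
  exact h2

lemma altS_eq_sum_range {z : ℂ} (hz : z ≠ 0) (M : ℕ) :
    altS z M = ∑ n ∈ range (M + 1), (-1 : ℂ) ^ n / (n : ℂ) ^ z := by
  induction M with
  | zero => simp [altS, Complex.zero_cpow hz]
  | succ M ih => rw [Finset.sum_range_succ, ← ih, altS, Finset.sum_Icc_succ_top (by omega), ← altS]

lemma altEta_eq_of_one_lt_re {z : ℂ} (hs : 1 < z.re) :
    altEta z = riemannZeta z * ((2 : ℂ) ^ ((1:ℂ) - z) - 1) := by
  have hz0 : z ≠ 0 := Complex.ne_zero_of_one_lt_re hs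
  have h1 : Tendsto (altS z) atTop (nhds (altEta z)) := tendsto_altS z (by linarith)
  have h2 : Tendsto (altS z) atTop (nhds (riemannZeta z * ((2 : ℂ) ^ ((1:ℂ) - z) - 1))) := by
    have := (hasSum_altF hs).tendsto_sum_nat
    have h3 := this.comp (tendsto_add_atTop_nat 1)
    exact h3.congr fun M => (altS_eq_sum_range hz0 M).symm
  exact tendsto_nhds_unique h1 h2

noncomputable def altPhi : ZMod 2 → ℂ := fun j => if j = 0 then 1 else -1

lemma altPhi_sum : ∑ j, altPhi j = 0 := by
  rw [show (Finset.univ : Finset (ZMod 2)) = {0, 1} from by decide]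
  rw [Finset.sum_insert (by decide), Finset.sum_singleton]
  simp [altPhi]

lemma altPhi_natCast (n : ℕ) : altPhi (n : ZMod 2) = (-1 : ℂ) ^ n := by
  rcases Nat.even_or_odd n with he | ho
  · have : (n : ZMod 2) = 0 := (ZMod.natCast_eq_zero_iff n 2).mpr he.two_dvd
    rw [this, he.neg_one_pow]; simp [altPhi]
  · have : (n : ZMod 2) ≠ 0 := by
      rw [Ne, ZMod.natCast_eq_zero_iff]
      exact fun h => (Nat.not_even_iff_odd.mpr ho) (even_iff_two_dvd.mpr h)
    rw [ho.neg_one_pow, altPhi, if_neg this]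

lemma LFunction_altPhi_eq_of_one_lt_re {z : ℂ} (hs : 1 < z.re) :
    ZMod.LFunction altPhi z = riemannZeta z * ((2 : ℂ) ^ ((1:ℂ) - z) - 1) := by
  have hz0 : z ≠ 0 := Complex.ne_zero_of_one_lt_re hs
  rw [ZMod.LFunction_eq_LSeries _ hs]
  have hterm : ∀ n : ℕ, LSeries.term (fun n : ℕ => altPhi n) z n = (-1:ℂ) ^ n / (n : ℂ) ^ z := by
    intro n
    rcases Nat.eq_zero_or_pos n with rfl | hn
    · simp [LSeries.term, Complex.zero_cpow hz0]
    · rw [LSeries.term_of_ne_zero (by omega), altPhi_natCast]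
  unfold LSeries
  rw [tsum_congr hterm]
  exact (hasSum_altF hs).tsum_eq

lemma altEta_eq_LFunction {z : ℂ} (hz : 0 < z.re) :
    altEta z = ZMod.LFunction altPhi z := by
  have hUo : IsOpen {w : ℂ | 0 < w.re} := isOpen_lt continuous_const Complex.continuous_re
  have hη := analyticOnNhd_altEta
  have hL : AnalyticOnNhd ℂ (ZMod.LFunction altPhi) {w : ℂ | 0 < w.re} :=
    ((ZMod.differentiable_LFunction_of_sum_zero altPhi_sum).differentiableOn).analyticOnNhd hUo
  have hpre : IsPreconnected {w : ℂ | 0 < w.re} :=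
    (convex_halfSpace_re_gt 0).isPreconnected
  have h2 : (2:ℂ) ∈ {w : ℂ | 0 < w.re} := by norm_num
  have hev : altEta =ᶠ[nhds 2] ZMod.LFunction altPhi := by
    have hop : IsOpen {w : ℂ | 1 < w.re} := isOpen_lt continuous_const Complex.continuous_re
    filter_upwards [hop.mem_nhds (by norm_num : (2:ℂ) ∈ {w : ℂ | 1 < w.re})] with w hw
    rw [altEta_eq_of_one_lt_re hw, LFunction_altPhi_eq_of_one_lt_re hw]
  exact hη.eqOn_of_preconnected_of_eventuallyEq hL hpre h2 hev hz

lemma LFunction_altPhi_eq {z : ℂ} (hz : z ≠ 1) :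
    ZMod.LFunction altPhi z = riemannZeta z * ((2 : ℂ) ^ ((1:ℂ) - z) - 1) := by
  have hUo : IsOpen {w : ℂ | w ≠ 1} := isOpen_compl_singleton
  have hL : AnalyticOnNhd ℂ (ZMod.LFunction altPhi) {w : ℂ | w ≠ 1} :=
    ((ZMod.differentiable_LFunction_of_sum_zero altPhi_sum).differentiableOn).analyticOnNhd hUo
  have hG : AnalyticOnNhd ℂ (fun w => riemannZeta w * ((2 : ℂ) ^ ((1:ℂ) - w) - 1))
      {w : ℂ | w ≠ 1} := by
    refine DifferentiableOn.analyticOnNhd (fun w hw => ?_) hUo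
    exact ((differentiableAt_riemannZeta hw).mul
      (((differentiable_const _).sub differentiable_id).const_cpow
        (Or.inl two_ne_zero) |>.sub (differentiable_const 1) |>.differentiableAt)
      ).differentiableWithinAt
  have hpre : IsPreconnected {w : ℂ | w ≠ 1} := by
    have h := isConnected_compl_singleton_of_one_lt_rank
      (by rw [Complex.rank_real_complex]; norm_num) (1 : ℂ)
    have e : {w : ℂ | w ≠ 1} = ({1} : Set ℂ)ᶜ := rfl
    rw [e]
    exact h.isPreconnected
  have h2 : (2:ℂ) ∈ {w : ℂ | w ≠ 1} := by norm_num
  have hev : ZMod.LFunction altPhi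
      =ᶠ[nhds 2] fun w => riemannZeta w * ((2 : ℂ) ^ ((1:ℂ) - w) - 1) := by
    have hop : IsOpen {w : ℂ | 1 < w.re} := isOpen_lt continuous_const Complex.continuous_re
    filter_upwards [hop.mem_nhds (by norm_num : (2:ℂ) ∈ {w : ℂ | 1 < w.re})] with w hw
    exact LFunction_altPhi_eq_of_one_lt_re hw
  exact hL.eqOn_of_preconnected_of_eventuallyEq hG hpre h2 hev hz


/-- For every complex `z` with `0 < Re z` and `z ≠ 1`, the partial sums
`∑_{n=1}^{N} (-1)^n / n^z` tend to `ζ(z) * (2^(1-z) - 1)` as `N → ∞`. -/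
theorem alternating_zeta_partial_sums (z : ℂ) (hre : 0 < z.re) (hz : z ≠ 1) :
    Tendsto (fun N : ℕ => ∑ n ∈ Finset.Icc 1 N, (-1 : ℂ) ^ n / (n : ℂ) ^ z)
      atTop (nhds (riemannZeta z * ((2 : ℂ) ^ ((1 : ℂ) - z) - 1))) := by

  have h1 := tendsto_altS z hre
  rw [altEta_eq_LFunction hre, LFunction_altPhi_eq hz] at h1
  exact h1
end

section
/- Let f : ℂ → ℂ be holomorphic on the open unit disk with ∫_{|w|<1} |f(w)|² dA(w) < ∞, where dA is Lebesgue area measure on ℂ. Then for every z with |z| < 1, f(z) = (1/π) ∫_{|w|<1} f(w) / (1 − z·conj(w))² dA(w). -/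
open MeasureTheory Metric Filter Set Topology

-- Aux 1: orthogonality
lemma bg_orth {m n : ℕ} (hmn : m ≠ n) (r : ℝ) :
    ∫ w in ball (0 : ℂ) r, w ^ m * (starRingEnd ℂ) w ^ n = 0 := by
  have hd : ((m : ℝ) - n) ≠ 0 := sub_ne_zero.2 (by exact_mod_cast hmn)
  set θ : ℝ := Real.pi / ((m : ℝ) - n) with hθ
  set e : Circle := Circle.exp θ with he
  have hec : (e : ℂ) = Complex.exp ((θ : ℂ) * Complex.I) := by
    simp [he, Circle.coe_exp]
  set R := rotation e with hR
  have hmp : MeasurePreserving R volume volume := R.measurePreserving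
  have hpre : R ⁻¹' (ball (0:ℂ) r) = ball (0:ℂ) r :=
    Set.ext fun w => by simp [mem_ball_zero_iff, R.norm_map]
  have key : ∫ w in ball (0:ℂ) r, (R w) ^ m * (starRingEnd ℂ) (R w) ^ n
      = ∫ w in ball (0:ℂ) r, w ^ m * (starRingEnd ℂ) w ^ n := by
    have := hmp.setIntegral_preimage_emb
      (R.toHomeomorph.toMeasurableEquiv.measurableEmbedding)
      (fun w => w ^ m * (starRingEnd ℂ) w ^ n) (ball (0:ℂ) r)
    rw [hpre] at this
    exact this
  have hfac : ((e : ℂ)) ^ m * (starRingEnd ℂ) (e : ℂ) ^ n = -1 := by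
    rw [hec, ← Complex.exp_conj]
    simp only [map_mul, Complex.conj_I, Complex.conj_ofReal, mul_neg]
    rw [← Complex.exp_nat_mul, ← Complex.exp_nat_mul, ← Complex.exp_add]
    have h2 : (m : ℂ) * ((θ : ℂ) * Complex.I) + (n : ℂ) * -((θ : ℂ) * Complex.I)
        = Real.pi * Complex.I := by
      have h3 : ((m : ℂ) - n) ≠ 0 := by
        intro h
        apply hd
        exact_mod_cast congrArg Complex.re h
      rw [hθ]
      push_cast
      field_simp
      ring
    rw [h2, Complex.exp_pi_mul_I]
  have hswap : ∫ w in ball (0:ℂ) r, (R w) ^ m * (starRingEnd ℂ) (R w) ^ n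
      = (-1 : ℂ) * ∫ w in ball (0:ℂ) r, w ^ m * (starRingEnd ℂ) w ^ n := by
    rw [← integral_const_mul]
    congr 1
    ext w
    simp only [hR, rotation_apply, map_mul, mul_pow]
    rw [← hfac]
    ring
  rw [hswap] at key
  linear_combination (-1/2 : ℂ) * key

lemma bg_radial (k : ℕ) {r : ℝ} (hr : 0 < r) :
    ∫ w in ball (0 : ℂ) r, ‖w‖ ^ k = 2 * Real.pi * r ^ (k + 2) / (k + 2) := by
  set g : ℝ → ℝ := fun y => Set.indicator (Iio r) (fun y => y ^ k) y with hg
  have h1 : ∫ w in ball (0 : ℂ) r, ‖w‖ ^ k = ∫ w : ℂ, g ‖w‖ := by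
    rw [← integral_indicator measurableSet_ball]
    congr 1
    ext w
    by_cases hw : w ∈ ball (0:ℂ) r
    · rw [Set.indicator_of_mem hw]
      simp only [hg]
      rw [Set.indicator_of_mem (by simpa [mem_ball_zero_iff] using hw)]
    · rw [Set.indicator_of_notMem hw]
      simp only [hg]
      rw [Set.indicator_of_notMem (by simpa [mem_ball_zero_iff] using hw)]
  rw [h1, integral_fun_norm_addHaar (volume : Measure ℂ) g]
  have hdim : Module.finrank ℝ ℂ = 2 := Complex.finrank_real_complex
  rw [hdim]
  have hvol : (volume : Measure ℂ).real (ball 0 1) = Real.pi := by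
    simp [Measure.real_def, Complex.volume_ball]
  rw [hvol]
  have h2 : ∫ y in Ioi (0:ℝ), y ^ (2 - 1) • g y = r ^ (k + 2) / (k + 2) := by
    have heq : ∀ y : ℝ, y ^ (2-1) • g y = Set.indicator (Iio r) (fun y => y ^ (k+1)) y := by
      intro y
      simp only [hg, Set.indicator_apply]
      by_cases hy : y ∈ Iio r <;> simp [hy] <;> ring
    simp_rw [heq]
    rw [integral_indicator measurableSet_Iio, Measure.restrict_restrict measurableSet_Iio,
      show (Iio r ∩ Ioi (0:ℝ)) = Ioo 0 r by ext y; simp [mem_Ioo, and_comm]]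
    rw [← integral_Ioc_eq_integral_Ioo, ← intervalIntegral.integral_of_le hr.le,
      integral_pow]
    push_cast
    ring
  rw [h2]
  simp only [smul_eq_mul, nsmul_eq_mul]
  push_cast
  ring

open MeasureTheory Metric Filter Set Topology

lemma bg_diag (n : ℕ) {r : ℝ} (hr : 0 < r) :
    ∫ w in ball (0 : ℂ) r, w ^ n * (starRingEnd ℂ) w ^ n
      = ((Real.pi * r ^ (2 * n + 2) / (n + 1) : ℝ) : ℂ) := by
  have h : ∀ w : ℂ, w ^ n * (starRingEnd ℂ) w ^ n = ((‖w‖ ^ (2 * n) : ℝ) : ℂ) := by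
    intro w
    rw [← mul_pow, Complex.mul_conj]
    rw [show (2 * n) = n * 2 by ring, pow_mul]
    norm_cast
    rw [Complex.normSq_eq_norm_sq, ← pow_mul, ← pow_mul, mul_comm 2 n]
  simp_rw [h]
  calc ∫ w in ball (0:ℂ) r, ((‖w‖ ^ (2 * n) : ℝ) : ℂ)
      = ((∫ w in ball (0:ℂ) r, ‖w‖ ^ (2 * n) : ℝ) : ℂ) := integral_ofReal
    _ = _ := by
        rw [bg_radial (2 * n) hr]
        norm_cast
        have h2 : ((2 * n : ℝ) + 2) ≠ 0 := by positivity
        have h3 : ((n : ℝ) + 1) ≠ 0 := by positivity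
        push_cast
        field_simp

lemma bg_summable {a : ℕ → ℂ} {t t' : ℝ} (ht : 0 ≤ t) (htt' : t < t')
    (hs : Summable fun m => a m * (t' : ℂ) ^ m) :
    Summable fun m => ‖a m‖ * t ^ m := by
  have h0 : 0 < t' := lt_of_le_of_lt ht htt'
  obtain ⟨C, hC⟩ : BddAbove (Set.range fun m => ‖a m * (t' : ℂ) ^ m‖) := by
    have := (hs.tendsto_atTop_zero.norm).bddAbove_range
    exact this
  have hC' : ∀ m, ‖a m‖ * t' ^ m ≤ C := by
    intro m
    have h2 := hC (Set.mem_range_self m)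
    simpa [norm_mul, norm_pow, Complex.norm_real, abs_of_pos h0] using h2
  have hq : t / t' < 1 := (div_lt_one h0).2 htt'
  refine Summable.of_nonneg_of_le (fun m => by positivity) (fun m => ?_)
    ((summable_geometric_of_lt_one (by positivity) hq).mul_left C)
  have : t ^ m = t' ^ m * (t / t') ^ m := by
    rw [← mul_pow, mul_div_cancel₀ _ h0.ne']
  rw [this, ← mul_assoc]
  have h3 : (0:ℝ) ≤ (t / t') ^ m := by positivity
  exact mul_le_mul_of_nonneg_right (hC' m) h3

lemma bg_kernel_hasSum {u : ℂ} (hu : ‖u‖ < 1) :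
    HasSum (fun n : ℕ => ((n : ℂ) + 1) * u ^ n) (1 / (1 - u) ^ 2) := by
  have h1 := hasSum_coe_mul_geometric_of_norm_lt_one hu
  have h2 := hasSum_geometric_of_norm_lt_one hu
  have h := h1.add h2
  have hne : (1 : ℂ) - u ≠ 0 := by
    intro h0
    rw [sub_eq_zero] at h0
    rw [← h0] at hu
    simp at hu
  have hfun : (fun n : ℕ => ((n : ℂ) + 1) * u ^ n)
      = fun n : ℕ => (n : ℂ) * u ^ n + u ^ n := by
    funext n; ring
  rw [hfun]
  convert h using 1
  rfl
  field_simp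
  ring

lemma bg_hsum (f : ℂ → ℂ) (hf : DifferentiableOn ℂ f (ball (0 : ℂ) 1))
    {w : ℂ} (hw : w ∈ ball (0 : ℂ) 1) :
    HasSum (fun m : ℕ => ((m.factorial : ℂ)⁻¹ * iteratedDeriv m f 0) * w ^ m) (f w) := by
  have h := Complex.hasSum_taylorSeries_on_ball hf hw
  convert h using 2 with m
  rfl
  simp [smul_eq_mul]
  ring

lemma bg_coeff (f : ℂ → ℂ) (hf : DifferentiableOn ℂ f (ball (0 : ℂ) 1))
    (n : ℕ) {r : ℝ} (hr0 : 0 < r) (hr1 : r < 1) :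
    ∫ w in ball (0 : ℂ) r, f w * (starRingEnd ℂ) w ^ n
      = ((Real.pi * r ^ (2 * n + 2) / (n + 1) : ℝ) : ℂ)
          * ((n.factorial : ℂ)⁻¹ * iteratedDeriv n f 0) := by
  set a : ℕ → ℂ := fun m => (m.factorial : ℂ)⁻¹ * iteratedDeriv m f 0 with ha
  set F : ℕ → ℂ → ℂ := fun m w => a m * w ^ m * (starRingEnd ℂ) w ^ n with hF
  -- summability of coefficients
  have hsummable : Summable fun m => ‖a m‖ * r ^ m := by
    have ht' : ((r + 1) / 2 : ℝ) < 1 := by linarith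
    have htt' : r < (r + 1) / 2 := by linarith
    have hmem : (((r + 1) / 2 : ℝ) : ℂ) ∈ ball (0 : ℂ) 1 := by
      rw [mem_ball_zero_iff]
      simp only [Complex.norm_real, Real.norm_eq_abs]
      rw [abs_of_pos (by linarith)]
      exact ht'
    exact bg_summable hr0.le htt' (bg_hsum f hf hmem).summable
  -- replace integrand by tsum
  have heq : EqOn (fun w => f w * (starRingEnd ℂ) w ^ n)
      (fun w => ∑' m, F m w) (ball (0 : ℂ) r) := by
    intro w hw
    have hw1 : w ∈ ball (0 : ℂ) 1 := ball_subset_ball hr1.le hw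
    exact (((bg_hsum f hf hw1).mul_right ((starRingEnd ℂ) w ^ n)).tsum_eq).symm
  rw [setIntegral_congr_fun measurableSet_ball heq]
  -- integrability of each term
  have hFc : ∀ m, Continuous (F m) := by
    intro m
    exact (continuous_const.mul (continuous_pow m)).mul
      (Complex.continuous_conj.pow n)
  have hF_int : ∀ m, IntegrableOn (F m) (ball (0 : ℂ) r) := fun m =>
    (((hFc m).continuousOn).integrableOn_compact (isCompact_closedBall _ _)).mono_set
      ball_subset_closedBall
  -- bound on integrals of norms
  have hF_sum : Summable fun m => ∫ w in ball (0 : ℂ) r, ‖F m w‖ := by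
    set V := ((volume : Measure ℂ) (ball (0 : ℂ) r)).toReal with hV
    have hb : ∀ m, ∫ w in ball (0 : ℂ) r, ‖F m w‖ ≤ ‖a m‖ * r ^ m * (r ^ n * V) := by
      intro m
      have hle : ∀ w ∈ ball (0 : ℂ) r, ‖F m w‖ ≤ ‖a m‖ * r ^ m * r ^ n := by
        intro w hw
        rw [mem_ball_zero_iff] at hw
        have hwr : ‖w‖ ≤ r := hw.le
        simp only [hF, norm_mul, norm_pow, RCLike.norm_conj]
        gcongr
        all_goals first | exact norm_nonneg w | exact hwr
      calc ∫ w in ball (0 : ℂ) r, ‖F m w‖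
          ≤ ∫ _w in ball (0 : ℂ) r, ‖a m‖ * r ^ m * r ^ n :=
            setIntegral_mono_on (hF_int m).norm (integrableOn_const measure_ball_lt_top.ne)
              measurableSet_ball hle
        _ = ‖a m‖ * r ^ m * (r ^ n * V) := by
            rw [setIntegral_const, smul_eq_mul, hV, Measure.real_def]
            ring
    refine Summable.of_nonneg_of_le
      (fun m => integral_nonneg fun w => norm_nonneg _) hb ?_
    exact hsummable.mul_right _
  rw [← integral_tsum_of_summable_integral_norm hF_int hF_sum]
  have hterm : ∀ m, ∫ w in ball (0 : ℂ) r, F m w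
      = a m * ∫ w in ball (0 : ℂ) r, w ^ m * (starRingEnd ℂ) w ^ n := by
    intro m
    simp_rw [hF, mul_assoc]
    exact integral_const_mul _ _
  rw [tsum_eq_single n ?_]
  · rw [hterm n, bg_diag n hr0, mul_comm]
  · intro m hmn
    rw [hterm m, bg_orth hmn r, mul_zero]

lemma bg_int (f : ℂ → ℂ) (hf : DifferentiableOn ℂ f (ball (0 : ℂ) 1))
    (hL2 : IntegrableOn (fun w => ‖f w‖ ^ 2) (ball (0 : ℂ) 1)) (n : ℕ) :
    IntegrableOn (fun w => f w * (starRingEnd ℂ) w ^ n) (ball (0 : ℂ) 1) := by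
  have hmeas : AEStronglyMeasurable f (volume.restrict (ball (0 : ℂ) 1)) :=
    hf.continuousOn.aestronglyMeasurable measurableSet_ball
  haveI : IsFiniteMeasure (volume.restrict (ball (0 : ℂ) 1)) :=
    ⟨by rw [Measure.restrict_apply_univ]; exact measure_ball_lt_top⟩
  have hmem : MemLp f 2 (volume.restrict (ball (0 : ℂ) 1)) := by
    rw [memLp_two_iff_integrable_sq_norm hmeas]
    exact hL2
  have hInt : IntegrableOn f (ball (0 : ℂ) 1) := hmem.integrable (by norm_num)
  refine Integrable.mono hInt
    (hmeas.mul ((Complex.continuous_conj.pow n).aestronglyMeasurable)) ?_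
  filter_upwards [ae_restrict_mem measurableSet_ball] with w hw
  rw [mem_ball_zero_iff] at hw
  rw [norm_mul, norm_pow, RCLike.norm_conj]
  calc ‖f w‖ * ‖w‖ ^ n ≤ ‖f w‖ * 1 ^ n := by
        gcongr
    _ = ‖f w‖ := by simp

lemma bg_coeff_limit (f : ℂ → ℂ) (hf : DifferentiableOn ℂ f (ball (0 : ℂ) 1))
    (hL2 : IntegrableOn (fun w => ‖f w‖ ^ 2) (ball (0 : ℂ) 1)) (n : ℕ) :
    ∫ w in ball (0 : ℂ) 1, f w * (starRingEnd ℂ) w ^ n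
      = ((Real.pi / (n + 1) : ℝ) : ℂ) * ((n.factorial : ℂ)⁻¹ * iteratedDeriv n f 0) := by
  set rs : ℕ → ℝ := fun i => 1 - 1 / (i + 2) with hrs
  have hrs0 : ∀ i, 0 < rs i := by
    intro i
    have h1 : (1 : ℝ) / (i + 2) ≤ 1 / 2 := by
      apply one_div_le_one_div_of_le
      · norm_num
      · push_cast; linarith [Nat.cast_nonneg (α := ℝ) i]
    simp only [hrs]
    linarith
  have hrs1 : ∀ i, rs i < 1 := by
    intro i
    have h1 : (0 : ℝ) < 1 / (i + 2) := by positivity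
    simp only [hrs]; linarith
  have hmono : Monotone rs := by
    intro i j hij
    have : (1 : ℝ) / (j + 2) ≤ 1 / (i + 2) := by
      apply one_div_le_one_div_of_le
      · positivity
      · push_cast; exact_mod_cast (by exact_mod_cast add_le_add_left (Nat.cast_le.2 hij) 2 :
          ((i : ℝ) + 2) ≤ (j : ℝ) + 2)
    simp only [hrs]; linarith
  have hsmono : Monotone fun i => ball (0 : ℂ) (rs i) :=
    fun i j hij => ball_subset_ball (hmono hij)
  have hUnion : (⋃ i, ball (0 : ℂ) (rs i)) = ball (0 : ℂ) 1 := by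
    apply subset_antisymm
    · exact Set.iUnion_subset fun i => ball_subset_ball (hrs1 i).le
    · intro w hw
      rw [mem_ball_zero_iff] at hw
      obtain ⟨i, hi⟩ := exists_nat_one_div_lt (show (0 : ℝ) < 1 - ‖w‖ by linarith)
      refine Set.mem_iUnion.2 ⟨i, ?_⟩
      rw [mem_ball_zero_iff]
      have h2 : (1 : ℝ) / (i + 2) ≤ 1 / (i + 1) := by
        apply one_div_le_one_div_of_le
        · positivity
        · linarith
      simp only [hrs]
      linarith
  have hIntn := bg_int f hf hL2 n
  have htends := tendsto_setIntegral_of_monotone (fun i => measurableSet_ball) hsmono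
    (by rw [hUnion]; exact hIntn)
  rw [hUnion] at htends
  have hval : ∀ i, ∫ w in ball (0 : ℂ) (rs i), f w * (starRingEnd ℂ) w ^ n
      = ((Real.pi * rs i ^ (2 * n + 2) / (n + 1) : ℝ) : ℂ)
          * ((n.factorial : ℂ)⁻¹ * iteratedDeriv n f 0) :=
    fun i => bg_coeff f hf n (hrs0 i) (hrs1 i)
  have hrtends : Tendsto rs atTop (𝓝 1) := by
    have h1 : Tendsto (fun i : ℕ => ((i : ℝ) + 2)) atTop atTop :=
      tendsto_atTop_add_const_right atTop 2 tendsto_natCast_atTop_atTop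
    have h2 : Tendsto (fun i : ℕ => 1 / ((i : ℝ) + 2)) atTop (𝓝 0) := by
      simpa [one_div, Pi.inv_def] using h1.inv_tendsto_atTop
    have h3 := tendsto_const_nhds.sub h2 (f := fun _ : ℕ => (1 : ℝ))
    simp only [sub_zero] at h3
    simpa [hrs, one_div] using h3
  have htends2 : Tendsto (fun i => ((Real.pi * rs i ^ (2 * n + 2) / (n + 1) : ℝ) : ℂ)
      * ((n.factorial : ℂ)⁻¹ * iteratedDeriv n f 0)) atTop
      (𝓝 (((Real.pi / (n + 1) : ℝ) : ℂ) * ((n.factorial : ℂ)⁻¹ * iteratedDeriv n f 0))) := by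
    have h3 : Tendsto (fun i => (Real.pi * rs i ^ (2 * n + 2) / (n + 1) : ℝ)) atTop
        (𝓝 (Real.pi / (n + 1))) := by
      have := ((hrtends.pow (2 * n + 2)).const_mul Real.pi).div_const ((n : ℝ) + 1)
      simpa using this
    exact ((Complex.continuous_ofReal.tendsto _).comp h3).mul_const _
  simp_rw [hval] at htends
  exact tendsto_nhds_unique htends htends2

/-- Reproducing property of the Bergman kernel of the unit disk: if `f` is
holomorphic and square-integrable on the open unit disk, then for every `z`
in the disk, `f z = (1/π) ∫_{|w|<1} f w / (1 - z * conj w)^2 dA(w)`. -/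
theorem bergman_reproducing_unit_disk (f : ℂ → ℂ)
    (hf : DifferentiableOn ℂ f (ball (0 : ℂ) 1))
    (hL2 : IntegrableOn (fun w => ‖f w‖ ^ 2) (ball (0 : ℂ) 1)) :
    ∀ z ∈ ball (0 : ℂ) 1,
      f z = (1 / (Real.pi : ℂ)) *
        ∫ w in ball (0 : ℂ) 1, f w / (1 - z * (starRingEnd ℂ) w) ^ 2 := by
  intro z hz
  have ht : ‖z‖ < 1 := mem_ball_zero_iff.1 hz
  have ht0 : (0 : ℝ) ≤ ‖z‖ := norm_nonneg z
  set G : ℕ → ℂ → ℂ := fun n w => ((n : ℂ) + 1) * z ^ n * (f w * (starRingEnd ℂ) w ^ n)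
    with hG
  -- pointwise expansion of the kernel
  have hpt : EqOn (fun w => f w / (1 - z * (starRingEnd ℂ) w) ^ 2)
      (fun w => ∑' n, G n w) (ball (0 : ℂ) 1) := by
    intro w hw
    rw [mem_ball_zero_iff] at hw
    have hu : ‖z * (starRingEnd ℂ) w‖ < 1 := by
      rw [norm_mul, RCLike.norm_conj]
      calc ‖z‖ * ‖w‖ ≤ ‖z‖ * 1 := by gcongr
        _ < 1 := by simpa using ht
    have h := (bg_kernel_hasSum hu).mul_left (f w)
    have h2 : (fun n : ℕ => f w * (((n : ℂ) + 1) * (z * (starRingEnd ℂ) w) ^ n))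
        = fun n => G n w := by
      funext n
      simp only [hG, mul_pow]
      ring
    rw [h2] at h
    have h3 := h.tsum_eq
    simp only []
    rw [h3, mul_one_div]
  rw [setIntegral_congr_fun measurableSet_ball hpt]
  -- integrability of each term
  have hGint : ∀ n, IntegrableOn (G n) (ball (0 : ℂ) 1) := fun n =>
    (bg_int f hf hL2 n).const_mul _
  -- summability of integrals of norms
  have hInt0 : IntegrableOn f (ball (0 : ℂ) 1) := by
    have := bg_int f hf hL2 0
    simpa using this
  set C := ∫ w in ball (0 : ℂ) 1, ‖f w‖ with hC
  have hGsum : Summable fun n => ∫ w in ball (0 : ℂ) 1, ‖G n w‖ := by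
    have hb : ∀ n, ∫ w in ball (0 : ℂ) 1, ‖G n w‖
        ≤ ((n : ℝ) + 1) * ‖z‖ ^ n * C := by
      intro n
      have h1 : ∀ w, ‖G n w‖ = ((n : ℝ) + 1) * ‖z‖ ^ n * ‖f w * (starRingEnd ℂ) w ^ n‖ := by
        intro w
        simp only [hG, norm_mul, norm_pow]
        rw [show ‖((n : ℂ) + 1)‖ = ((n : ℝ) + 1) by
          rw [show ((n : ℂ) + 1) = ((n + 1 : ℕ) : ℂ) by push_cast; ring, Complex.norm_natCast]
          exact Nat.cast_add_one n]
      simp_rw [h1]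
      rw [integral_const_mul]
      have h2 : ∫ w in ball (0 : ℂ) 1, ‖f w * (starRingEnd ℂ) w ^ n‖ ≤ C := by
        refine setIntegral_mono_on (bg_int f hf hL2 n).norm hInt0.norm measurableSet_ball ?_
        intro w hw
        rw [mem_ball_zero_iff] at hw
        rw [norm_mul, norm_pow, RCLike.norm_conj]
        calc ‖f w‖ * ‖w‖ ^ n ≤ ‖f w‖ * 1 ^ n := by gcongr
          _ = ‖f w‖ := by simp
      have h3 : (0 : ℝ) ≤ ((n : ℝ) + 1) * ‖z‖ ^ n := by positivity
      exact mul_le_mul_of_nonneg_left h2 h3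
    refine Summable.of_nonneg_of_le
      (fun n => integral_nonneg fun w => norm_nonneg _) hb ?_
    have hz1 : ‖(‖z‖)‖ < 1 := by rwa [Real.norm_eq_abs, abs_of_nonneg ht0]
    have hs1 : Summable (fun n : ℕ => (n : ℝ) * ‖z‖ ^ n) := by
      simpa using summable_pow_mul_geometric_of_norm_lt_one 1 hz1
    have hs2 : Summable (fun n : ℕ => ‖z‖ ^ n) := summable_geometric_of_lt_one ht0 ht
    refine ((hs1.add hs2).mul_right C).congr fun n => ?_
    ring
  rw [← integral_tsum_of_summable_integral_norm (fun n => hGint n) hGsum]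
  have hπ : (Real.pi : ℂ) ≠ 0 := Complex.ofReal_ne_zero.mpr Real.pi_ne_zero
  have hterm : ∀ n, ∫ w in ball (0 : ℂ) 1, G n w
      = (Real.pi : ℂ) * (((n.factorial : ℂ)⁻¹ * iteratedDeriv n f 0) * z ^ n) := by
    intro n
    simp only [hG]
    rw [integral_const_mul, bg_coeff_limit f hf hL2 n]
    have hn1 : ((n : ℂ) + 1) ≠ 0 := Nat.cast_add_one_ne_zero n
    have hfac : ((n.factorial : ℂ)) ≠ 0 := Nat.cast_ne_zero.mpr n.factorial_ne_zero
    push_cast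
    field_simp
  simp_rw [hterm]
  rw [tsum_mul_left, (bg_hsum f hf hz).tsum_eq, ← mul_assoc, one_div,
    inv_mul_cancel₀ hπ, one_mul]
end

section
/- Let D = {(z₁,z₂) ∈ ℂ² : |z₂| < 1/(1+|z₁|)}. Then the Lebesgue volume of D is infinite (so nonzero constant functions are not square-integrable on D), while the holomorphic function (z₁,z₂) ↦ z₂ is square-integrable on D: ∫_D |z₂|² dV < ∞. -/
open MeasureTheory

open MeasureTheory Set Metric
open scoped ENNReal NNReal

noncomputable section

lemma aux_open : IsOpen {p : ℂ × ℂ | ‖p.2‖ < 1 / (1 + ‖p.1‖)} := by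
  have hc : Continuous fun p : ℂ × ℂ => 1 / (1 + ‖p.1‖) := by
    apply Continuous.div continuous_const
    · exact continuous_const.add (continuous_norm.comp continuous_fst)
    · intro p
      have := norm_nonneg p.1
      positivity
  exact isOpen_lt (continuous_norm.comp continuous_snd) hc

lemma annulus_volume (n : ℕ) :
    volume (ball (0:ℂ) (n+1) \ ball (0:ℂ) n) = ENNReal.ofReal (2*n+1) * NNReal.pi := by
  rw [measure_diff (ball_subset_ball (by norm_num)) measurableSet_ball.nullMeasurableSet
    measure_ball_lt_top.ne]
  rw [Complex.volume_ball, Complex.volume_ball]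
  rw [← ENNReal.sub_mul (by intro _ _; exact ENNReal.coe_ne_top)]
  congr 1
  rw [← ENNReal.ofReal_pow (by positivity), ← ENNReal.ofReal_pow (by positivity),
    ← ENNReal.ofReal_sub _ (by positivity)]
  congr 1
  ring

lemma tsum_top : ∑' n : ℕ, ENNReal.ofReal (1/((n:ℝ)+2)) = ⊤ := by
  by_contra h
  have hs : Summable fun n : ℕ => (1/((n:ℝ)+2)).toNNReal :=
    ENNReal.tsum_coe_ne_top_iff_summable.mp h
  have hs2 : Summable fun n : ℕ => (1/((n:ℝ)+2)) := by
    have := NNReal.summable_coe.mpr hs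
    refine this.congr fun n => ?_
    rw [Real.coe_toNNReal _ (by positivity)]
  have : Summable fun n : ℕ => 1/((n:ℝ)) := by
    rw [← summable_nat_add_iff 2]
    exact hs2.congr (by intro n; push_cast; ring_nf)
  exact Real.not_summable_one_div_natCast this

end

noncomputable section

lemma subset_D (n : ℕ) :
    (ball (0:ℂ) (n+1) \ ball (0:ℂ) n) ×ˢ ball (0:ℂ) (1/((n:ℝ)+2)) ⊆
      {p : ℂ × ℂ | ‖p.2‖ < 1 / (1 + ‖p.1‖)} := by
  rintro ⟨z₁, z₂⟩ ⟨⟨h1, -⟩, h2⟩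
  simp only [mem_ball_zero_iff] at h1 h2
  have ha : (0:ℝ) ≤ ‖z₁‖ := norm_nonneg _
  have : 1 + ‖z₁‖ ≤ (n:ℝ) + 2 := by linarith
  calc ‖z₂‖ < 1/((n:ℝ)+2) := h2
    _ ≤ 1 / (1 + ‖z₁‖) := by
        apply one_div_le_one_div_of_le (by linarith) this

lemma vol_inf : volume {p : ℂ × ℂ | ‖p.2‖ < 1 / (1 + ‖p.1‖)} = ⊤ := by
  set A : ℕ → Set (ℂ × ℂ) := fun n =>
    (ball (0:ℂ) (n+1) \ ball (0:ℂ) n) ×ˢ ball (0:ℂ) (1/((n:ℝ)+2)) with hA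
  have hmeas : ∀ n, MeasurableSet (A n) := fun n =>
    (measurableSet_ball.diff measurableSet_ball).prod measurableSet_ball
  have hdisj : Pairwise (Function.onFun Disjoint A) := by
    intro m n hmn
    wlog h : m < n generalizing m n
    · exact (this hmn.symm (by omega)).symm
    refine Set.disjoint_left.mpr ?_
    rintro ⟨z₁, z₂⟩ ⟨⟨hm1, -⟩, -⟩ ⟨⟨-, hn2⟩, -⟩
    simp only [mem_ball_zero_iff, not_lt] at hm1 hn2
    have : (m:ℝ) + 1 ≤ n := by exact_mod_cast h
    linarith
  have hvol : ∀ n : ℕ, ENNReal.ofReal (1/(2*((n:ℝ)+2))) * ((NNReal.pi : ℝ≥0∞) * NNReal.pi)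
      ≤ volume (A n) := by
    intro n
    rw [hA]
    simp only
    rw [Measure.volume_eq_prod, Measure.prod_prod, annulus_volume,
      Complex.volume_ball]
    rw [← ENNReal.ofReal_pow (by positivity)]
    calc ENNReal.ofReal (1/(2*((n:ℝ)+2))) * ((NNReal.pi : ℝ≥0∞) * NNReal.pi)
        ≤ ENNReal.ofReal ((2*(n:ℝ)+1) * (1/((n:ℝ)+2))^2) * ((NNReal.pi : ℝ≥0∞) * NNReal.pi) := by
          gcongr
          have h2 : (0:ℝ) ≤ (n:ℝ) := n.cast_nonneg
          rw [div_pow, one_pow, mul_one_div, div_le_div_iff₀ (by positivity) (by positivity)]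
          nlinarith
      _ = ENNReal.ofReal (2*(n:ℝ)+1) * (NNReal.pi : ℝ≥0∞) *
            (ENNReal.ofReal ((1/((n:ℝ)+2))^2) * NNReal.pi) := by
          rw [ENNReal.ofReal_mul (by positivity)]
          ring
  have htsum : (∑' n : ℕ, ENNReal.ofReal (1/(2*((n:ℝ)+2)))) = ⊤ := by
    have : ∀ n : ℕ, ENNReal.ofReal (1/(2*((n:ℝ)+2)))
        = ENNReal.ofReal (1/2) * ENNReal.ofReal (1/((n:ℝ)+2)) := by
      intro n
      rw [← ENNReal.ofReal_mul (by norm_num)]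
      congr 1
      field_simp
    simp_rw [this]
    rw [ENNReal.tsum_mul_left, tsum_top, ENNReal.mul_top (by simp)]
  refine top_unique ?_
  have hpi : ((NNReal.pi : ℝ≥0∞) * NNReal.pi) ≠ 0 := by
    simp [NNReal.pi_ne_zero]
  calc (⊤:ℝ≥0∞) = (∑' n : ℕ, ENNReal.ofReal (1/(2*((n:ℝ)+2)))) *
        ((NNReal.pi : ℝ≥0∞) * NNReal.pi) := by
        rw [htsum, ENNReal.top_mul hpi]
    _ ≤ ∑' n, volume (A n) := by
        rw [← ENNReal.tsum_mul_right]
        exact ENNReal.tsum_le_tsum hvol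
    _ = volume (⋃ n, A n) := (measure_iUnion hdisj hmeas).symm
    _ ≤ _ := measure_mono (Set.iUnion_subset subset_D)

end

noncomputable section

lemma inner_bound (r : ℝ) (hr : 0 ≤ r) :
    ∫⁻ y in ball (0:ℂ) r, ENNReal.ofReal (‖y‖ ^ 2) ≤
      ENNReal.ofReal (r^4) * NNReal.pi := by
  calc ∫⁻ y in ball (0:ℂ) r, ENNReal.ofReal (‖y‖ ^ 2)
      ≤ ∫⁻ _ in ball (0:ℂ) r, ENNReal.ofReal (r^2) := by
        refine setLIntegral_mono measurable_const fun y hy => ?_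
        apply ENNReal.ofReal_le_ofReal
        have hyr : ‖y‖ ≤ r :=
          le_of_lt (by simpa using mem_ball_zero_iff.mp hy)
        exact pow_le_pow_left₀ (norm_nonneg y) hyr 2
    _ = ENNReal.ofReal (r^2) * volume (ball (0:ℂ) r) := setLIntegral_const _ _
    _ = ENNReal.ofReal (r^4) * NNReal.pi := by
        rw [Complex.volume_ball, ← ENNReal.ofReal_pow hr, ← mul_assoc,
          ← ENNReal.ofReal_mul (by positivity)]
        norm_num
        ring_nf

lemma sq_integrable : IntegrableOn (fun p : ℂ × ℂ => ‖p.2‖ ^ 2)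
    {p : ℂ × ℂ | ‖p.2‖ < 1 / (1 + ‖p.1‖)} := by
  have hD := aux_open.measurableSet
  constructor
  · exact ((continuous_norm.comp continuous_snd).pow 2).aestronglyMeasurable.restrict
  · rw [hasFiniteIntegral_iff_ofReal (ae_of_all _ fun p => by positivity)]
    set g : ℂ × ℂ → ℝ≥0∞ := fun p => ENNReal.ofReal (‖p.2‖ ^ 2) with hg
    have hgm : Measurable g := by
      apply Measurable.ennreal_ofReal
      exact ((continuous_norm.comp continuous_snd).pow 2).measurable
    have key : ∀ x : ℂ, (∫⁻ y, ({p : ℂ × ℂ | ‖p.2‖ < 1 / (1 + ‖p.1‖)}.indicator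
        g (x, y))) ≤ ENNReal.ofReal ((1 + ‖x‖) ^ (-(4:ℝ))) * NNReal.pi := by
      intro x
      have hx : (0:ℝ) < 1 + ‖x‖ := by
        have := norm_nonneg x; linarith
      have hmem : ∀ y : ℂ, ((x, y) ∈ {p : ℂ × ℂ | ‖p.2‖ < 1 / (1 + ‖p.1‖)})
          ↔ y ∈ ball (0:ℂ) (1 / (1 + ‖x‖)) := by
        intro y; simp [mem_ball_zero_iff]
      have heq : ∀ y : ℂ, ({p : ℂ × ℂ | ‖p.2‖ < 1 / (1 + ‖p.1‖)}.indicator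
          g (x, y)) = (ball (0:ℂ) (1 / (1 + ‖x‖))).indicator
            (fun y => ENNReal.ofReal (‖y‖ ^ 2)) y := by
        intro y
        by_cases h : (x, y) ∈ {p : ℂ × ℂ | ‖p.2‖ < 1 / (1 + ‖p.1‖)}
        · rw [Set.indicator_of_mem h, Set.indicator_of_mem ((hmem y).mp h)]
        · rw [Set.indicator_of_notMem h, Set.indicator_of_notMem (fun hc => h ((hmem y).mpr hc))]
      simp_rw [heq]
      rw [lintegral_indicator measurableSet_ball]
      refine (inner_bound _ (by positivity)).trans_eq ?_
      congr 2
      have h4 : ((4:ℝ)) = ((4:ℕ):ℝ) := by norm_num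
      rw [Real.rpow_neg hx.le, h4, Real.rpow_natCast]
      rw [div_pow, one_pow, one_div]
    calc ∫⁻ p in {p : ℂ × ℂ | ‖p.2‖ < 1 / (1 + ‖p.1‖)}, g p
        = ∫⁻ p, ({p : ℂ × ℂ | ‖p.2‖ < 1 / (1 + ‖p.1‖)}.indicator g) p := by
          rw [lintegral_indicator hD]
      _ = ∫⁻ x, ∫⁻ y, ({p : ℂ × ℂ | ‖p.2‖ < 1 / (1 + ‖p.1‖)}.indicator
            g (x, y)) := by
          rw [Measure.volume_eq_prod, lintegral_prod _ (hgm.indicator hD).aemeasurable]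
      _ ≤ ∫⁻ x : ℂ, ENNReal.ofReal ((1 + ‖x‖) ^ (-(4:ℝ))) * NNReal.pi := lintegral_mono key
      _ = (∫⁻ x : ℂ, ENNReal.ofReal ((1 + ‖x‖) ^ (-(4:ℝ)))) * NNReal.pi :=
          lintegral_mul_const' _ _ ENNReal.coe_ne_top
      _ < ⊤ := ENNReal.mul_lt_top
          (finite_integral_one_add_norm (by rw [Complex.finrank_real_complex]; norm_num))
          ENNReal.coe_lt_top

end


/-- The domain `D = {(z₁,z₂) ∈ ℂ² : |z₂| < 1/(1+|z₁|)}` has infinite volume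
(so nonzero constants are not square-integrable on `D`), while the holomorphic
function `(z₁,z₂) ↦ z₂` is square-integrable on `D`. -/
theorem volume_infinite_and_coordinate_sqInt :
    volume {p : ℂ × ℂ | ‖p.2‖ < 1 / (1 + ‖p.1‖)} = ⊤ ∧
    IntegrableOn (fun p : ℂ × ℂ => ‖p.2‖ ^ 2)
      {p : ℂ × ℂ | ‖p.2‖ < 1 / (1 + ‖p.1‖)} := by
  exact ⟨vol_inf, sq_integrable⟩
end

section
/- Let q > 0 be a real number and let t be a nonzero complex number with |t| < 1. Then ∑_{k=0}^{∞} [Γ(q+2k+3) / ((2k+1)! · Γ(q+1))] · t^{2k} = ((q+1)/(2t)) · [(1−t)^{−(q+2)} − (1+t)^{−(q+2)}], where the powers of 1−t and 1+t are principal-branch complex powers. -/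
open Filter Topology Metric Complex

noncomputable def binomCoeff (a : ℝ) (n : ℕ) : ℝ :=
  Real.Gamma (a + n) / (n.factorial * Real.Gamma a)

lemma binomCoeff_zero (a : ℝ) (ha : 0 < a) : binomCoeff a 0 = 1 := by
  have := Real.Gamma_pos_of_pos ha
  simp [binomCoeff, div_self this.ne']

lemma binomCoeff_pos (a : ℝ) (ha : 0 < a) (n : ℕ) : 0 < binomCoeff a n := by
  have h1 : 0 < Real.Gamma (a + n) := Real.Gamma_pos_of_pos (by positivity)
  have h2 : 0 < Real.Gamma a := Real.Gamma_pos_of_pos ha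
  have h3 : (0:ℝ) < n.factorial := by exact_mod_cast n.factorial_pos
  unfold binomCoeff
  positivity

lemma binomCoeff_succ (a : ℝ) (ha : 0 < a) (n : ℕ) :
    binomCoeff a (n + 1) = (a + n) / (n + 1) * binomCoeff a n := by
  have han : (0:ℝ) < a + n := by positivity
  have hΓ : Real.Gamma (a + (n + 1 : ℕ)) = (a + n) * Real.Gamma (a + n) := by
    push_cast
    rw [show a + ((n:ℝ) + 1) = (a + n) + 1 by ring, Real.Gamma_add_one han.ne']
  have h2 : 0 < Real.Gamma a := Real.Gamma_pos_of_pos ha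
  have h3 : (0:ℝ) < n.factorial := by exact_mod_cast n.factorial_pos
  rw [binomCoeff, binomCoeff, hΓ, Nat.factorial_succ]
  push_cast
  field_simp

lemma binom_aux_summable (a : ℝ) (ha : 0 < a) {r : ℝ} (hr0 : 0 < r) (hr1 : r < 1) :
    Summable (fun n : ℕ => (a + n) * binomCoeff a n * r ^ n) := by
  apply summable_of_ratio_test_tendsto_lt_one hr1
  · filter_upwards with n
    have := binomCoeff_pos a ha n
    positivity
  · have h0 : Tendsto (fun n : ℕ => a / ((n : ℝ) + 1)) atTop (𝓝 0) := by
      have h1 := (tendsto_const_div_atTop_nhds_zero_nat a).comp (tendsto_add_atTop_nat 1)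
      apply h1.congr
      intro n
      simp [Function.comp]
    have htend : Tendsto (fun n : ℕ => r * (a / ((n : ℝ) + 1) + 1)) atTop (𝓝 r) := by
      have := (h0.add (tendsto_const_nhds (x := (1:ℝ)))).const_mul r
      simpa using this
    apply htend.congr
    intro n
    have hc := binomCoeff_pos a ha n
    have hc1 := binomCoeff_pos a ha (n + 1)
    have han : (0:ℝ) < a + n := by positivity
    have hrn : (0:ℝ) < r ^ n := by positivity
    have han1 : (0:ℝ) < a + ((n : ℝ) + 1) := by positivity
    rw [Real.norm_eq_abs, Real.norm_eq_abs, abs_of_pos (by push_cast; positivity),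
      abs_of_pos (by positivity), binomCoeff_succ a ha n, pow_succ]
    push_cast
    field_simp

set_option maxHeartbeats 2000000 in
lemma binom_key (a : ℝ) (ha : 0 < a) {w : ℂ} (hw : ‖w‖ < 1) :
    Summable (fun n : ℕ => ((binomCoeff a n : ℝ) : ℂ) * w ^ n) ∧
      HasDerivAt (fun z : ℂ => ∑' n : ℕ, ((binomCoeff a n : ℝ) : ℂ) * z ^ n)
        (∑' n : ℕ, ((binomCoeff a n : ℝ) : ℂ) * (n * w ^ (n - 1))) w ∧
      Summable (fun n : ℕ => ((binomCoeff a n : ℝ) : ℂ) * (n * w ^ (n - 1))) := by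
  obtain ⟨r, hwr, hr1⟩ := exists_between hw
  have hr0 : 0 < r := lt_of_le_of_lt (norm_nonneg w) hwr
  have hu : Summable (fun n : ℕ => binomCoeff a n * n * r ^ (n - 1)) := by
    rw [← summable_nat_add_iff 1]
    apply (binom_aux_summable a ha hr0 hr1).congr
    intro n
    have hn1 : ((n:ℝ) + 1) ≠ 0 := by positivity
    simp only [binomCoeff_succ a ha n, Nat.add_sub_cancel]
    push_cast
    field_simp
  have hderiv : ∀ (n : ℕ) (y : ℂ), y ∈ ball (0:ℂ) r →
      HasDerivAt (fun z : ℂ => ((binomCoeff a n : ℝ) : ℂ) * z ^ n)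
        (((binomCoeff a n : ℝ) : ℂ) * (n * y ^ (n - 1))) y := fun n y _ =>
    (hasDerivAt_pow n y).const_mul _
  have hbound : ∀ (n : ℕ) (y : ℂ), y ∈ ball (0:ℂ) r →
      ‖((binomCoeff a n : ℝ) : ℂ) * (n * y ^ (n - 1))‖
        ≤ binomCoeff a n * n * r ^ (n - 1) := by
    intro n y hy
    rw [mem_ball_zero_iff] at hy
    have hc := (binomCoeff_pos a ha n).le
    have hnorm : ‖((binomCoeff a n : ℝ) : ℂ) * (n * y ^ (n - 1))‖
        = binomCoeff a n * ((n:ℝ) * ‖y‖ ^ (n - 1)) := by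
      rw [norm_mul, norm_mul, norm_pow, Complex.norm_real, Real.norm_eq_abs,
        _root_.abs_of_nonneg hc, Complex.norm_natCast]
    rw [hnorm]
    calc binomCoeff a n * ((n:ℝ) * ‖y‖ ^ (n - 1))
        ≤ binomCoeff a n * ((n:ℝ) * r ^ (n - 1)) := by
          gcongr
      _ = binomCoeff a n * n * r ^ (n - 1) := by ring
  have h0mem : (0:ℂ) ∈ ball (0:ℂ) r := mem_ball_self hr0
  have hsum0 : Summable (fun n : ℕ => ((binomCoeff a n : ℝ) : ℂ) * (0:ℂ) ^ n) := by
    apply summable_of_ne_finset_zero (s := ({0} : Finset ℕ))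
    intro n hn
    simp only [Finset.mem_singleton] at hn
    simp [zero_pow hn]
  have hwmem : w ∈ ball (0:ℂ) r := mem_ball_zero_iff.2 hwr
  refine ⟨?_, ?_, ?_⟩
  · exact summable_of_summable_hasDerivAt_of_isPreconnected hu isOpen_ball
      (convex_ball 0 r).isPreconnected hderiv hbound h0mem hsum0 hwmem
  · exact hasDerivAt_tsum_of_isPreconnected hu isOpen_ball
      (convex_ball 0 r).isPreconnected hderiv hbound h0mem hsum0 hwmem
  · exact Summable.of_norm_bounded hu (fun n => hbound n w hwmem)

lemma binom_ODE (a : ℝ) (ha : 0 < a) {w : ℂ} (hw : ‖w‖ < 1) :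
    (1 - w) * (∑' n : ℕ, ((binomCoeff a n : ℝ) : ℂ) * (n * w ^ (n - 1)))
      = (a : ℂ) * ∑' n : ℕ, ((binomCoeff a n : ℝ) : ℂ) * w ^ n := by
  obtain ⟨hS, -, hSD⟩ := binom_key a ha hw
  set c' : ℕ → ℂ := fun n => ((binomCoeff a n : ℝ) : ℂ) with hc'def
  set D : ℂ := ∑' n : ℕ, c' n * (n * w ^ (n - 1)) with hDdef
  set Gw : ℂ := ∑' n : ℕ, c' n * w ^ n with hGdef
  have hHD : HasSum (fun n : ℕ => c' n * (n * w ^ (n - 1))) D := hSD.hasSum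
  have hHG : HasSum (fun n : ℕ => c' n * w ^ n) Gw := hS.hasSum
  have hcsucc : ∀ n : ℕ, c' (n + 1) * ((n : ℂ) + 1) = ((a : ℂ) + n) * c' n := by
    intro n
    have hn1 : ((n:ℂ) + 1) ≠ 0 := Nat.cast_add_one_ne_zero n
    simp only [hc'def]
    rw [binomCoeff_succ a ha n]
    push_cast
    field_simp
  have hshift : HasSum (fun n : ℕ => ((a : ℂ) + n) * c' n * w ^ n) D := by
    have h1 := (hasSum_nat_add_iff' (f := fun n : ℕ => c' n * (n * w ^ (n - 1))) 1).2 hHD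
    have h2 : (fun n : ℕ => c' (n + 1) * ((n + 1 : ℕ) * w ^ (n + 1 - 1)))
        = fun n : ℕ => ((a : ℂ) + n) * c' n * w ^ n := by
      funext n
      have := hcsucc n
      push_cast [Nat.add_sub_cancel]
      push_cast at this
      rw [show c' (n + 1) * (((n:ℂ) + 1) * w ^ n) = (c' (n + 1) * ((n:ℂ) + 1)) * w ^ n by ring,
        this]
    rw [h2] at h1
    simpa using h1
  have hzD : HasSum (fun n : ℕ => (n : ℂ) * c' n * w ^ n) (w * D) := by
    have h1 := hHD.mul_left w
    have h2 : (fun n : ℕ => w * (c' n * (n * w ^ (n - 1))))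
        = fun n : ℕ => (n : ℂ) * c' n * w ^ n := by
      funext n
      cases n with
      | zero => simp
      | succ m => push_cast [Nat.add_sub_cancel, pow_succ]; ring
    rwa [h2] at h1
  have haG : HasSum (fun n : ℕ => (a : ℂ) * (c' n * w ^ n)) ((a : ℂ) * Gw) := hHG.mul_left _
  have hadd := haG.add hzD
  have h3 : (fun n : ℕ => (a : ℂ) * (c' n * w ^ n) + (n : ℂ) * c' n * w ^ n)
      = fun n : ℕ => ((a : ℂ) + n) * c' n * w ^ n := by
    funext n; ring
  rw [h3] at hadd
  have hDeq : D = (a : ℂ) * Gw + w * D := hshift.unique hadd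
  linear_combination hDeq

lemma binomial_hasSum (a : ℝ) (ha : 0 < a) {z : ℂ} (hz : ‖z‖ < 1) :
    HasSum (fun n : ℕ => ((binomCoeff a n : ℝ) : ℂ) * z ^ n) ((1 - z) ^ (-(a : ℂ))) := by
  have hne : ∀ w : ℂ, ‖w‖ < 1 → (1 : ℂ) - w ≠ 0 := by
    intro w hw h
    rw [sub_eq_zero] at h
    rw [← h] at hw
    simp at hw
  set h : ℂ → ℂ := fun z => (∑' n : ℕ, ((binomCoeff a n : ℝ) : ℂ) * z ^ n) * (1 - z) ^ (a : ℂ)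
    with hhdef
  have hder : ∀ w ∈ ball (0:ℂ) 1, HasDerivAt h 0 w := by
    intro w hwmem
    rw [mem_ball_zero_iff] at hwmem
    obtain ⟨hS, hD, hSD⟩ := binom_key a ha hwmem
    have h1w := hne w hwmem
    have hslit : (1 - w) ∈ Complex.slitPlane := by
      refine Complex.mem_slitPlane_iff.2 (Or.inl ?_)
      simp only [Complex.sub_re, Complex.one_re]
      have : w.re ≤ ‖w‖ := le_trans (le_abs_self _) (Complex.abs_re_le_norm w)
      linarith
    have hpow : HasDerivAt (fun z : ℂ => (1 - z) ^ (a : ℂ))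
        ((a : ℂ) * (1 - w) ^ ((a : ℂ) - 1) * (-1)) w := by
      have hbase : HasDerivAt (fun z : ℂ => 1 - z) (-1) w := by
        simpa using (hasDerivAt_id w).const_sub 1
      exact hbase.cpow_const hslit
    have hmul := hD.mul hpow
    refine hmul.congr_deriv ?_
    symm
    have hODE := binom_ODE a ha hwmem
    have hsplit : (1 - w) ^ ((a : ℂ) - 1) * (1 - w) = (1 - w) ^ (a : ℂ) := by
      rw [cpow_sub _ _ h1w, cpow_one]
      field_simp
    set D : ℂ := ∑' n : ℕ, ((binomCoeff a n : ℝ) : ℂ) * (n * w ^ (n - 1))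
    set Gw : ℂ := ∑' n : ℕ, ((binomCoeff a n : ℝ) : ℂ) * w ^ n
    linear_combination D * hsplit - ((1 - w) ^ ((a:ℂ) - 1) : ℂ) * hODE
  have hconst : ∀ w ∈ ball (0:ℂ) 1, h w = h 0 := by
    intro w hw
    have hdiff : DifferentiableOn ℂ h (ball (0:ℂ) 1) :=
      fun y hy => (hder y hy).differentiableAt.differentiableWithinAt
    have hfd : ∀ y ∈ ball (0:ℂ) 1, fderivWithin ℂ h (ball (0:ℂ) 1) y = 0 := by
      intro y hy
      rw [fderivWithin_of_isOpen isOpen_ball hy, (hder y hy).hasFDerivAt.fderiv]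
      exact ContinuousLinearMap.ext fun v => by simp
    exact (convex_ball (0:ℂ) 1).is_const_of_fderivWithin_eq_zero hdiff hfd hw
      (mem_ball_self one_pos)
  have hG0 : (∑' n : ℕ, ((binomCoeff a n : ℝ) : ℂ) * (0:ℂ) ^ n) = 1 := by
    have hs : HasSum (fun n : ℕ => ((binomCoeff a n : ℝ) : ℂ) * (0:ℂ) ^ n)
        (((binomCoeff a 0 : ℝ) : ℂ) * (0:ℂ) ^ 0) := by
      apply hasSum_single 0
      intro b hb
      simp [zero_pow hb]
    rw [hs.tsum_eq]
    simp [binomCoeff_zero a ha]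
  have h0val : h 0 = 1 := by
    simp only [hhdef, sub_zero, one_cpow, mul_one, hG0]
  have hz1 := hconst z (mem_ball_zero_iff.2 hz)
  rw [h0val] at hz1
  have hGz : (∑' n : ℕ, ((binomCoeff a n : ℝ) : ℂ) * z ^ n) = (1 - z) ^ (-(a : ℂ)) := by
    rw [cpow_neg]
    exact eq_inv_of_mul_eq_one_left hz1
  obtain ⟨hS, -, -⟩ := binom_key a ha hz
  have := hS.hasSum
  rwa [hGz] at this

/-- Closed form for the series of the weighted Bergman kernel of the disk with
weight `(1-|z|)^q`: for `q > 0` and `0 < |t| < 1`,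
`∑_{k≥0} Γ(q+2k+3)/((2k+1)!·Γ(q+1)) · t^{2k}
  = ((q+1)/(2t)) ((1-t)^{-(q+2)} - (1+t)^{-(q+2)})`. -/
theorem weighted_disk_kernel_closed_form (q : ℝ) (hq : 0 < q) (t : ℂ)
    (ht0 : t ≠ 0) (ht : ‖t‖ < 1) :
    HasSum
      (fun k : ℕ =>
        ((Real.Gamma (q + 2 * k + 3) : ℂ) /
          (((2 * k + 1).factorial : ℂ) * (Real.Gamma (q + 1) : ℂ))) * t ^ (2 * k))
      (((q : ℂ) + 1) / (2 * t) *
        ((1 - t) ^ (-((q : ℂ) + 2)) - (1 + t) ^ (-((q : ℂ) + 2)))) := by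
  have hq2 : (0:ℝ) < q + 2 := by linarith
  have htn : ‖t‖ < 1 := ht
  have h1 := binomial_hasSum (q + 2) hq2 (z := t) htn
  have h2 := binomial_hasSum (q + 2) hq2 (z := -t) (by rwa [norm_neg])
  have hsub := h1.sub h2
  rw [sub_neg_eq_add] at hsub
  have hcast : (((q + 2 : ℝ)) : ℂ) = (q : ℂ) + 2 := by push_cast; ring
  rw [hcast] at hsub
  have hinj : Function.Injective (fun k : ℕ => 2 * k + 1) := by
    intro a b h
    dsimp at h
    omega
  have hzero : ∀ n : ℕ, n ∉ Set.range (fun k : ℕ => 2 * k + 1) →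
      ((binomCoeff (q + 2) n : ℝ) : ℂ) * t ^ n
        - ((binomCoeff (q + 2) n : ℝ) : ℂ) * (-t) ^ n = 0 := by
    intro n hn
    have he : Even n := by
      rcases Nat.even_or_odd n with h | h
      · exact h
      · obtain ⟨m, hm⟩ := h
        exact absurd ⟨m, show 2 * m + 1 = n by omega⟩ hn
    rw [he.neg_pow]
    ring
  have hodd := (hinj.hasSum_iff hzero).2 hsub
  have hfinal := hodd.mul_left (((q : ℂ) + 1) / (2 * t))
  have hreal : ∀ k : ℕ, Real.Gamma (q + 2 * k + 3)
      = (q + 1) * binomCoeff (q + 2) (2 * k + 1)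
        * ((2 * k + 1).factorial * Real.Gamma (q + 1)) := by
    intro k
    have hΓ : Real.Gamma (q + 2) = (q + 1) * Real.Gamma (q + 1) := by
      rw [show q + 2 = (q + 1) + 1 by ring, Real.Gamma_add_one (by linarith)]
    have harg : q + 2 + ((2 * k + 1 : ℕ) : ℝ) = q + 2 * k + 3 := by push_cast; ring
    rw [binomCoeff, harg, hΓ]
    have h1 : Real.Gamma (q + 1) > 0 := Real.Gamma_pos_of_pos (by linarith)
    have h2 : (0:ℝ) < ((2 * k + 1).factorial : ℝ) := by exact_mod_cast Nat.factorial_pos _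
    field_simp
  have heq : (fun k : ℕ => ((q : ℂ) + 1) / (2 * t) *
      (((binomCoeff (q + 2) (2 * k + 1) : ℝ) : ℂ) * t ^ (2 * k + 1)
        - ((binomCoeff (q + 2) (2 * k + 1) : ℝ) : ℂ) * (-t) ^ (2 * k + 1)))
      = fun k : ℕ =>
        ((Real.Gamma (q + 2 * k + 3) : ℂ) /
          (((2 * k + 1).factorial : ℂ) * (Real.Gamma (q + 1) : ℂ))) * t ^ (2 * k) := by
    funext k
    have hC := congrArg (fun x : ℝ => (x : ℂ)) (hreal k)
    push_cast at hC
    have hoddpow : (-t) ^ (2 * k + 1) = -(t ^ (2 * k + 1)) := Odd.neg_pow ⟨k, by ring⟩ t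
    have hΓpos : Real.Gamma (q + 1) ≠ 0 := (Real.Gamma_pos_of_pos (by linarith)).ne'
    have hfact : ((2 * k + 1).factorial : ℂ) ≠ 0 := by
      exact_mod_cast Nat.factorial_ne_zero _
    rw [hoddpow, hC]
    have hΓC : ((Real.Gamma (q + 1) : ℝ) : ℂ) ≠ 0 := by exact_mod_cast hΓpos
    rw [pow_succ]
    field_simp
    ring
  simp only [Function.comp_def] at hfinal
  rw [← heq]
  exact hfinal
end
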